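/- Assume n ≥ 2, let (C_i) be a regular family of centralities, and let (θ_i) be thresholds with θ_i > 0 for every i. For each agent i let M_i = max{C_i(g+ij) : g a network, j ≠ i with ij ∉ g, and C_i(g) < θ_i} (this maximum exists since there are finitely many networks and C_i(∅) = 0 < θ_i for the empty network ∅). Assume that for every network g and every non-adjacent pair i, j: C_i(g) < θ_i if and only if C_i(g+ij) ≤ M_i. Then the truncated game with thresholds (θ_i) has at least one APSN; in fact every edge-maximal element of the set 𝒢 = {g : C_l(g) ≤ M_l for all l ∈ V} (which is nonempty, containing the empty network) is an APSN. -/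

import Mathlib

open SimpleGraph

/-- Degree of vertex `i` in network `g`. -/
noncomputable def deg {V : Type*} (g : SimpleGraph V) (i : V) : ℕ :=
  Nat.card (g.neighborSet i)

/-- The network `g` with the (missing) edge `ij` added. -/
def addE {V : Type*} (g : SimpleGraph V) (i j : V) : SimpleGraph V :=
  g ⊔ SimpleGraph.fromEdgeSet {s(i, j)}

/-- The network `g` with the edge `ij` removed. -/
def delE {V : Type*} (g : SimpleGraph V) (i j : V) : SimpleGraph V :=
  g.deleteEdges {s(i, j)}

/-- Utility of agent `i` in the game with centralities `C` and edge cost `c`. -/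
noncomputable def util {V : Type*} (C : V → SimpleGraph V → ℝ) (c : ℝ) (i : V)
    (g : SimpleGraph V) : ℝ :=
  C i g - c * (deg g i)

/-- Adding the missing edge `ij` is an improving move. -/
def ImprovingAdd {V : Type*} (C : V → SimpleGraph V → ℝ) (c : ℝ) (g : SimpleGraph V)
    (i j : V) : Prop :=
  util C c i (addE g i j) ≥ util C c i g ∧ util C c j (addE g i j) ≥ util C c j g ∧
    (util C c i (addE g i j) > util C c i g ∨ util C c j (addE g i j) > util C c j g)

/-- Deleting the edge `ij` is an improving move. -/
def ImprovingDel {V : Type*} (C : V → SimpleGraph V → ℝ) (c : ℝ) (g : SimpleGraph V)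
    (i j : V) : Prop :=
  util C c i (delE g i j) > util C c i g ∨ util C c j (delE g i j) > util C c j g

/-- `g` is pairwise stable at edge cost `c`. -/
def PairwiseStable {V : Type*} (C : V → SimpleGraph V → ℝ) (c : ℝ) (g : SimpleGraph V) : Prop :=
  (∀ i j : V, i ≠ j → ¬ g.Adj i j → ¬ ImprovingAdd C c g i j) ∧
  (∀ i j : V, g.Adj i j → ¬ ImprovingDel C c g i j)

/-- `g` is asymptotically pairwise stable. -/
def APSN {V : Type*} (C : V → SimpleGraph V → ℝ) (g : SimpleGraph V) : Prop :=
  ∃ ε₀ : ℝ, 0 < ε₀ ∧ ∀ c : ℝ, 0 < c → c < ε₀ → PairwiseStable C c g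

/-- Axiom 1: the centrality of agent `i` is increasing. -/
def Axiom1 {V : Type*} (C : V → SimpleGraph V → ℝ) (i : V) : Prop :=
  ∀ (g : SimpleGraph V) (j : V), j ≠ i → ¬ g.Adj i j → C i (addE g i j) > C i g

/-- Axiom 1′: the centrality of agent `i` is decreasing. -/
def Axiom1' {V : Type*} (C : V → SimpleGraph V → ℝ) (i : V) : Prop :=
  ∀ (g : SimpleGraph V) (j : V), j ≠ i → ¬ g.Adj i j → C i (addE g i j) < C i g

/-- Axiom 2: the centrality of agent `i` is componentwise. -/
def Axiom2 {V : Type*} (C : V → SimpleGraph V → ℝ) (i : V) : Prop :=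
  ∀ (g : SimpleGraph V) (j : V), j ≠ i → ¬ g.Adj i j →
    ((g.Reachable i j → C i (addE g i j) > C i g) ∧
     (¬ g.Reachable i j → C i (addE g i j) ≤ C i g))

/-- Axiom 2′: the centrality of agent `i` is peripheral. -/
def Axiom2' {V : Type*} (C : V → SimpleGraph V → ℝ) (i : V) : Prop :=
  ∀ (g : SimpleGraph V) (j : V), j ≠ i → ¬ g.Adj i j →
    ((g.Reachable i j → C i (addE g i j) ≤ C i g) ∧
     (¬ g.Reachable i j → C i (addE g i j) > C i g))

/-- The centrality of agent `i` is degree homophilic with (strictly increasing) `f`. -/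
def DegreeHomophilic {V : Type*} (C : V → SimpleGraph V → ℝ) (i : V) (f : ℕ → ℤ) : Prop :=
  ∀ (g : SimpleGraph V) (j : V), j ≠ i → ¬ g.Adj i j →
    (C i (addE g i j) > C i g ↔ (deg g j : ℤ) ≤ f (deg g i))

/-- A family of centralities is regular: each is increasing, vanishes on isolated
vertices, and adding an edge cannot increase the centrality of an unrelated node. -/
def RegularFam {V : Type*} (C : V → SimpleGraph V → ℝ) : Prop :=
  (∀ i, Axiom1 C i) ∧
  (∀ (i : V) (g : SimpleGraph V), (∀ j, ¬ g.Adj i j) → C i g = 0) ∧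
  (∀ (g : SimpleGraph V) (i j k : V), i ≠ j → ¬ g.Adj i j → k ≠ i → k ≠ j →
    C k (addE g i j) ≤ C k g)


private lemma addE_comm' {V : Type*} (g : SimpleGraph V) (i j : V) :
    addE g i j = addE g j i := by
  simp [addE, Sym2.eq_swap]

private lemma addE_adj' {V : Type*} (g : SimpleGraph V) {i j : V} (h : i ≠ j) :
    (addE g i j).Adj i j := by
  simp [addE, h]

private lemma delE_comm' {V : Type*} (g : SimpleGraph V) (i j : V) :
    delE g i j = delE g j i := by
  simp [delE, Sym2.eq_swap]

private lemma not_adj_delE' {V : Type*} (g : SimpleGraph V) (i j : V) :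
    ¬ (delE g i j).Adj i j := by
  simp [delE]

private lemma addE_delE' {V : Type*} {g : SimpleGraph V} {i j : V} (h : g.Adj i j) :
    addE (delE g i j) i j = g := by
  ext a b
  simp only [addE, delE, SimpleGraph.sup_adj, SimpleGraph.deleteEdges_adj,
    SimpleGraph.fromEdgeSet_adj, Set.mem_singleton_iff, Sym2.eq_iff]
  constructor
  · rintro (⟨hab, _⟩ | ⟨(⟨rfl, rfl⟩ | ⟨rfl, rfl⟩), _⟩)
    · exact hab
    · exact h
    · exact h.symm
  · intro hab
    by_cases hc : (a = i ∧ b = j) ∨ (a = j ∧ b = i)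
    · exact Or.inr ⟨hc, hab.ne⟩
    · exact Or.inl ⟨hab, hc⟩

private lemma deg_addE' {V : Type*} [Fintype V] (g : SimpleGraph V) {i j : V}
    (hne : i ≠ j) (hadj : ¬ g.Adj i j) : deg (addE g i j) i = deg g i + 1 := by
  have hset : (addE g i j).neighborSet i = insert j (g.neighborSet i) := by
    ext k
    simp only [SimpleGraph.mem_neighborSet, addE, SimpleGraph.sup_adj,
      SimpleGraph.fromEdgeSet_adj, Set.mem_singleton_iff, Sym2.eq_iff, Set.mem_insert_iff]
    constructor
    · aesop
    · aesop
  have hj : j ∉ g.neighborSet i := hadj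
  rw [deg, deg, hset, Nat.card_coe_set_eq, Nat.card_coe_set_eq,
    Set.ncard_insert_of_notMem hj]

theorem statement_16 {V : Type*} [Fintype V] (hn : 2 ≤ Fintype.card V)
    (C : V → SimpleGraph V → ℝ) (hreg : RegularFam C)
    (θ : V → ℝ) (hθ : ∀ i, 0 < θ i) (M : V → ℝ)
    (hM : ∀ i, M i = sSup {x : ℝ | ∃ (g : SimpleGraph V) (j : V), j ≠ i ∧ ¬ g.Adj i j ∧
      C i g < θ i ∧ x = C i (addE g i j)})
    (hkey : ∀ (g : SimpleGraph V) (i j : V), i ≠ j → ¬ g.Adj i j →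
      (C i g < θ i ↔ C i (addE g i j) ≤ M i)) :
    -- 𝒢 = {g : ∀ l, C l g ≤ M l} has an edge-maximal element, and every
    -- edge-maximal element of 𝒢 is an APSN of the truncated game
    (∃ g : SimpleGraph V, (∀ l, C l g ≤ M l) ∧
      (∀ g' : SimpleGraph V, g ≤ g' → (∀ l, C l g' ≤ M l) → g' = g)) ∧
    (∀ g : SimpleGraph V, (∀ l, C l g ≤ M l) →
      (∀ g' : SimpleGraph V, g ≤ g' → (∀ l, C l g' ≤ M l) → g' = g) →
      APSN (fun i h => min (C i h) (θ i)) g) := by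
  classical
  have hV : Nonempty V := Fintype.card_pos_iff.mp (by omega)
  have hbot : ∀ l, C l (⊥ : SimpleGraph V) = 0 := fun l => hreg.2.1 l ⊥ (by simp)
  have hMpos : ∀ l, 0 < M l := by
    intro l
    obtain ⟨j, hj⟩ := Fintype.exists_ne_of_one_lt_card (by omega) l
    have hx : C l (addE (⊥ : SimpleGraph V) l j) > 0 := by
      have := hreg.1 l ⊥ j hj (by simp)
      rwa [hbot l] at this
    have hmem : C l (addE (⊥ : SimpleGraph V) l j) ∈ {x : ℝ | ∃ (g : SimpleGraph V) (j' : V),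
        j' ≠ l ∧ ¬ g.Adj l j' ∧ C l g < θ l ∧ x = C l (addE g l j')} :=
      ⟨⊥, j, hj, by simp, by rw [hbot l]; exact hθ l, rfl⟩
    have hbdd : BddAbove {x : ℝ | ∃ (g : SimpleGraph V) (j' : V),
        j' ≠ l ∧ ¬ g.Adj l j' ∧ C l g < θ l ∧ x = C l (addE g l j')} := by
      apply Set.Finite.bddAbove
      have hsub : {x : ℝ | ∃ (g : SimpleGraph V) (j' : V),
          j' ≠ l ∧ ¬ g.Adj l j' ∧ C l g < θ l ∧ x = C l (addE g l j')} ⊆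
          (fun p : SimpleGraph V × V => C l (addE p.1 l p.2)) '' Set.univ := by
        rintro x ⟨g, j', -, -, -, rfl⟩
        exact ⟨(g, j'), trivial, rfl⟩
      exact (Set.finite_univ.image _).subset hsub
    have hle := le_csSup hbdd hmem
    rw [hM l]
    linarith
  have h𝒢fin : {g : SimpleGraph V | ∀ l, C l g ≤ M l}.Finite := Set.toFinite _
  have h𝒢ne : (⊥ : SimpleGraph V) ∈ {g : SimpleGraph V | ∀ l, C l g ≤ M l} := by
    intro l; rw [hbot l]; exact (hMpos l).le
  obtain ⟨g0, hg0, hmax0⟩ := Set.Finite.exists_maximalFor id _ h𝒢fin ⟨⊥, h𝒢ne⟩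
  refine ⟨⟨g0, hg0, fun g' hle hg' => le_antisymm (hmax0 hg' hle) hle⟩, ?_⟩
  intro g hg hmax
  have haddnot : ∀ i j : V, i ≠ j → ¬ g.Adj i j →
      ∃ l, (l = i ∨ l = j) ∧ M l < C l (addE g i j) := by
    intro i j hne hnadj
    have hne' : addE g i j ≠ g := fun h => hnadj (h ▸ addE_adj' g hne)
    have hle : g ≤ addE g i j := le_sup_left
    have hnall : ¬ ∀ l, C l (addE g i j) ≤ M l := fun h => hne' (hmax _ hle h)
    push_neg at hnall
    obtain ⟨l, hl⟩ := hnall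
    refine ⟨l, ?_, hl⟩
    by_contra hc
    push_neg at hc
    exact absurd (le_trans (hreg.2.2 g i j l hne hnadj hc.1 hc.2) (hg l)) (not_le.mpr hl)
  have hhigh : ∀ i j : V, i ≠ j → ¬ g.Adj i j → M i < C i (addE g i j) → θ i ≤ C i g := by
    intro i j hne hnadj hMi
    by_contra hlt
    push_neg at hlt
    exact absurd ((hkey g i j hne hnadj).mp hlt) (not_le.mpr hMi)
  have hdelkey : ∀ i j : V, g.Adj i j →
      min (C i (delE g i j)) (θ i) < min (C i g) (θ i) := by
    intro i j hadj
    have hneij : i ≠ j := hadj.ne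
    have hnadj : ¬ (delE g i j).Adj i j := not_adj_delE' g i j
    have hres : addE (delE g i j) i j = g := addE_delE' hadj
    have hlt : C i (delE g i j) < C i g := by
      have := hreg.1 i (delE g i j) j hneij.symm hnadj
      rwa [hres] at this
    have hθi : C i (delE g i j) < θ i := by
      refine (hkey (delE g i j) i j hneij hnadj).mpr ?_
      rw [hres]; exact hg i
    rw [min_eq_left hθi.le]
    exact lt_min hlt hθi
  set F : V × V → ℝ := fun p =>
    if g.Adj p.1 p.2 then min (C p.1 g) (θ p.1) - min (C p.1 (delE g p.1 p.2)) (θ p.1)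
    else 1 with hF
  have hFpos : ∀ p : V × V, 0 < F p := by
    intro p
    by_cases h : g.Adj p.1 p.2
    · simp only [hF, if_pos h]
      linarith [hdelkey p.1 p.2 h]
    · simp [hF, h]
  have hune : (Finset.univ : Finset (V × V)).Nonempty := Finset.univ_nonempty
  refine ⟨Finset.univ.inf' hune F, (Finset.lt_inf'_iff hune).mpr fun p _ => hFpos p, ?_⟩
  intro c hc hcε
  constructor
  · intro i j hneij hnadj himp
    obtain ⟨l, hl, hMl⟩ := haddnot i j hneij hnadj
    have key : ∀ a b : V, a ≠ b → ¬ g.Adj a b → M a < C a (addE g a b) →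
        util (fun i h => min (C i h) (θ i)) c a (addE g a b) <
        util (fun i h => min (C i h) (θ i)) c a g := by
      intro a b hab hnab hMa
      have hθa := hhigh a b hab hnab hMa
      have hCa : C a g < C a (addE g a b) := hreg.1 a g b hab.symm hnab
      have h1 : min (C a g) (θ a) = θ a := min_eq_right hθa
      have h2 : min (C a (addE g a b)) (θ a) = θ a :=
        min_eq_right (le_of_lt (lt_of_le_of_lt hθa hCa))
      have hdeg : deg (addE g a b) a = deg g a + 1 := deg_addE' g hab hnab
      simp only [util, h1, h2, hdeg]
      push_cast
      linarith
    obtain rfl | rfl := hl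
    · exact absurd himp.1 (not_le.mpr (key l j hneij hnadj hMl))
    · have hMl' : M l < C l (addE g l i) := by rwa [addE_comm' g i l] at hMl
      have hlt := key l i hneij.symm (fun h => hnadj h.symm) hMl'
      rw [addE_comm' g l i] at hlt
      exact absurd himp.2.1 (not_le.mpr hlt)
  · intro i j hadj himp
    have key : ∀ a b : V, g.Adj a b →
        ¬ util (fun i h => min (C i h) (θ i)) c a (delE g a b) >
          util (fun i h => min (C i h) (θ i)) c a g := by
      intro a b hab
      have hgap : Finset.univ.inf' hune F ≤ F (a, b) := Finset.inf'_le F (Finset.mem_univ _)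
      have hFab : F (a, b) = min (C a g) (θ a) - min (C a (delE g a b)) (θ a) := if_pos hab
      rw [hFab] at hgap
      have hdeg : deg g a = deg (delE g a b) a + 1 := by
        conv_lhs => rw [← addE_delE' hab]
        exact deg_addE' _ hab.ne (not_adj_delE' g a b)
      simp only [util, hdeg, not_lt]
      push_cast
      linarith
    rcases himp with h | h
    · exact key i j hadj h
    · rw [delE_comm' g i j] at h
      exact key j i hadj.symm h
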